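/- Let P be a slant irreducible finite Γ-colored d-complete poset with top tree T. Then every element of T that is not minimal in T covers at most two elements of P. -/

import Mathlib

/-!
Common definitions: Dynkin diagram data, Γ-colored posets, and the coloring
properties EC, NA, AC, ICE2, UCB1, LCB1 from the paper, together with
Γ-colored d-complete and Γ-colored minuscule posets, top trees, slant
irreducibility, extensions, lower frontier censuses, and full heaps.
-/

universe u v w

variable {Γ : Type u} {P : Type v}

/-- The integers `θ a b` form a Dynkin diagram datum. -/
def DynkinDatum (θ : Γ → Γ → ℤ) : Prop :=
  (∀ a : Γ, θ a a = 2) ∧ (∀ a b : Γ, a ≠ b → θ a b ≤ 0) ∧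
    (∀ a b : Γ, a ≠ b → (θ a b = 0 ↔ θ b a = 0))

/-- Colors `a` and `b` are adjacent. -/
def AdjColor (θ : Γ → Γ → ℤ) (a b : Γ) : Prop := θ a b < 0

/-- The Dynkin diagram is simply laced. -/
def SimplyLaced (θ : Γ → Γ → ℤ) : Prop :=
  ∀ a b : Γ, a ≠ b → θ a b = 0 ∨ θ a b = -1

/-- All closed intervals are finite. -/
def LocallyFinitePoset (α : Type*) [PartialOrder α] : Prop :=
  ∀ x y : α, (Set.Icc x y).Finite

/-- A poset is connected if it cannot be written as a disjoint union of two nonempty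
subposets with no comparabilities between them. -/
def ConnectedPoset (α : Type*) [PartialOrder α] : Prop :=
  ∀ S : Set α, S.Nonempty → Sᶜ.Nonempty → ∃ x ∈ S, ∃ y ∈ Sᶜ, x ≤ y ∨ y ≤ x

section
variable [PartialOrder P]

/-- (EC) Elements with equal colors are comparable. -/
def ColoredEC (κ : P → Γ) : Prop := ∀ x y : P, κ x = κ y → x ≤ y ∨ y ≤ x

/-- (NA) Neighbors have adjacent colors. -/
def ColoredNA (θ : Γ → Γ → ℤ) (κ : P → Γ) : Prop :=
  ∀ x y : P, x ⋖ y → AdjColor θ (κ x) (κ y)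

/-- (AC) Elements with adjacent colors are comparable. -/
def ColoredAC (θ : Γ → Γ → ℤ) (κ : P → Γ) : Prop :=
  ∀ x y : P, AdjColor θ (κ x) (κ y) → x ≤ y ∨ y ≤ x

/-- (ICE2) Between consecutive elements of a color `a`, the census of colors
adjacent to `a` is two. -/
def ColoredICE2 (θ : Γ → Γ → ℤ) (κ : P → Γ) : Prop :=
  ∀ (a : Γ) (x y : P), κ x = a → κ y = a → x < y → (∀ z ∈ Set.Ioo x y, κ z ≠ a) →
    (∑ᶠ z ∈ Set.Ioo x y, -θ (κ z) a) = 2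

/-- `U(x,P)`: elements above `x` with color adjacent to that of `x`. -/
def USet (θ : Γ → Γ → ℤ) (κ : P → Γ) (x : P) : Set P :=
  {y : P | x < y ∧ AdjColor θ (κ y) (κ x)}

/-- `L(x,P)`: elements below `x` with color adjacent to that of `x`. -/
def LSet (θ : Γ → Γ → ℤ) (κ : P → Γ) (x : P) : Set P :=
  {y : P | y < x ∧ AdjColor θ (κ y) (κ x)}

/-- (UCB1) Upper frontier census bound. -/
def ColoredUCB1 (θ : Γ → Γ → ℤ) (κ : P → Γ) : Prop :=
  ∀ x : P, (∀ y : P, κ y = κ x → ¬x < y) →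
    (USet θ κ x).Finite ∧ (∑ᶠ y ∈ USet θ κ x, -θ (κ y) (κ x)) ≤ 1

/-- (LCB1) Lower frontier census bound. -/
def ColoredLCB1 (θ : Γ → Γ → ℤ) (κ : P → Γ) : Prop :=
  ∀ x : P, (∀ y : P, κ y = κ x → ¬y < x) →
    (LSet θ κ x).Finite ∧ (∑ᶠ y ∈ LSet θ κ x, -θ (κ y) (κ x)) ≤ 1

/-- A Γ-colored d-complete poset: locally finite, surjectively colored, and
satisfying EC, NA, AC, ICE2, and UCB1. -/
def GColoredDComplete (θ : Γ → Γ → ℤ) (κ : P → Γ) : Prop :=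
  LocallyFinitePoset P ∧ Function.Surjective κ ∧ ColoredEC κ ∧ ColoredNA θ κ ∧
    ColoredAC θ κ ∧ ColoredICE2 θ κ ∧ ColoredUCB1 θ κ

/-- A Γ-colored minuscule poset: Γ-colored d-complete and LCB1. -/
def GColoredMinuscule (θ : Γ → Γ → ℤ) (κ : P → Γ) : Prop :=
  GColoredDComplete θ κ ∧ ColoredLCB1 θ κ

/-- The top tree: the set of elements maximal in their color class. -/
def TopTree (κ : P → Γ) : Set P := {x : P | ∀ y : P, κ y = κ x → ¬x < y}

/-- `x` is covered by `y` within the subposet `S`. -/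
def CoversIn (S : Set P) (x y : P) : Prop :=
  x ∈ S ∧ y ∈ S ∧ x < y ∧ ∀ z ∈ S, x < z → ¬z < y

/-- Slant irreducibility of a Γ-colored d-complete poset. -/
def SlantIrreducible (κ : P → Γ) : Prop :=
  ConnectedPoset P ∧ ∀ x y : P, CoversIn (TopTree κ) x y → ∃ z : P, z ≠ y ∧ κ z = κ y

/-- A saturated chain in a subposet `S`: a chain that is convex in `S`. -/
def SaturatedChainIn (S C : Set P) : Prop :=
  C ⊆ S ∧ IsChain (· ≤ ·) C ∧ ∀ x ∈ C, ∀ y ∈ C, ∀ z ∈ S, x < z → z < y → z ∈ C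

/-- The lower frontier census at the element `y`. -/
noncomputable def LCensus (θ : Γ → Γ → ℤ) (κ : P → Γ) (y : P) : ℤ :=
  ∑ᶠ x ∈ LSet θ κ y, -θ (κ x) (κ y)

/-- A full heap: locally finite, surjectively colored, EC, NA, AC, ICE2, and every
color class order-isomorphic to ℤ. -/
def FullHeap (θ : Γ → Γ → ℤ) (κ : P → Γ) : Prop :=
  LocallyFinitePoset P ∧ Function.Surjective κ ∧ ColoredEC κ ∧ ColoredNA θ κ ∧
    ColoredAC θ κ ∧ ColoredICE2 θ κ ∧ ∀ a : Γ, Nonempty ({x : P // κ x = a} ≃o ℤ)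

end

/-- `ι` realizes the colored poset `A` as an order filter of the colored poset `B`. -/
def FilterEmbedding {G : Type*} {A B : Type*} [PartialOrder A] [PartialOrder B]
    (κ : A → G) (κ' : B → G) (ι : A → B) : Prop :=
  (∀ p q : A, ι p ≤ ι q ↔ p ≤ q) ∧ (∀ p : A, κ' (ι p) = κ p) ∧ IsUpperSet (Set.range ι)

/-- `B` is an extension of `A` by the color `a`, with extending element `x`. -/
def IsExtensionBy {G : Type*} {A B : Type*} [PartialOrder A] [PartialOrder B]
    (θ : G → G → ℤ) (κ : A → G) (κ' : B → G) (a : G) (ι : A → B) (x : B) : Prop :=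
  Finite B ∧ GColoredDComplete θ κ' ∧ ConnectedPoset B ∧
    FilterEmbedding κ κ' ι ∧ (Set.range ι)ᶜ = {x} ∧ κ' x = a

/-- In a slant irreducible finite Γ-colored d-complete poset, every
element of the top tree that is not minimal in the top tree covers at most two
elements of P. -/
theorem topTree_covers_at_most_two [Fintype Γ] [PartialOrder P] [Fintype P] [Nonempty P]
    (θ : Γ → Γ → ℤ) (κ : P → Γ) (hθ : DynkinDatum θ)
    (hdc : GColoredDComplete θ κ) (hsi : SlantIrreducible κ) :
    ∀ y ∈ TopTree κ, (∃ z ∈ TopTree κ, z < y) → {x : P | x ⋖ y}.ncard ≤ 2 := by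

  intro y hy hz
  obtain ⟨z, hzT, hzy⟩ := hz
  obtain ⟨hlf, hsurj, hEC, hNA, hAC, hICE2, hUCB1⟩ := hdc
  obtain ⟨hconn, hslant⟩ := hsi
  classical
  -- pick a maximal element of the top tree below y
  have hTfin : ({u : P | u ∈ TopTree κ ∧ u < y}).Finite := Set.toFinite _
  have hTne : hTfin.toFinset.Nonempty := ⟨z, by simp [Set.Finite.mem_toFinset]; exact ⟨hzT, hzy⟩⟩
  obtain ⟨z₀, hz₀mem, hz₀max⟩ := (by obtain ⟨m, hm⟩ := Finset.exists_maximal hTne; exact ⟨m, hm.1, fun x hx hlt => lt_irrefl _ (lt_of_lt_of_le hlt (hm.2 hx hlt.le))⟩ : ∃ m ∈ hTfin.toFinset, ∀ x ∈ hTfin.toFinset, ¬m < x)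
  rw [Set.Finite.mem_toFinset] at hz₀mem
  have hcov : CoversIn (TopTree κ) z₀ y := by
    refine ⟨hz₀mem.1, hy, hz₀mem.2, fun v hvT hv hlt => ?_⟩
    exact hz₀max v (by rw [Set.Finite.mem_toFinset]; exact ⟨hvT, hlt⟩) hv
  obtain ⟨w, hwne, hwcol⟩ := hslant _ _ hcov
  have hwy : w < y := by
    rcases hEC w y hwcol with h | h
    · exact lt_of_le_of_ne h hwne
    · rcases eq_or_lt_of_le h with heq | hlt
      · exact absurd heq.symm hwne
      · exact absurd hlt (hy w hwcol)
  -- pick a maximal element x' of color κ y strictly below y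
  have hSfin : ({u : P | κ u = κ y ∧ u < y}).Finite := Set.toFinite _
  have hSne : hSfin.toFinset.Nonempty := ⟨w, by rw [Set.Finite.mem_toFinset]; exact ⟨hwcol, hwy⟩⟩
  obtain ⟨x', hx'mem, hx'max⟩ := (by obtain ⟨m, hm⟩ := Finset.exists_maximal hSne; exact ⟨m, hm.1, fun x hx hlt => lt_irrefl _ (lt_of_lt_of_le hlt (hm.2 hx hlt.le))⟩ : ∃ m ∈ hSfin.toFinset, ∀ x ∈ hSfin.toFinset, ¬m < x)
  rw [Set.Finite.mem_toFinset] at hx'mem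
  obtain ⟨hx'col, hx'y⟩ := hx'mem
  have hnoA : ∀ u ∈ Set.Ioo x' y, κ u ≠ κ y := by
    intro u hu hcu
    exact hx'max u (by rw [Set.Finite.mem_toFinset]; exact ⟨hcu, hu.2⟩) hu.1
  have hICE := hICE2 (κ y) x' y hx'col rfl hx'y hnoA
  -- every element covered by y lies in Ioo x' y
  have hsub : {x : P | x ⋖ y} ⊆ Set.Ioo x' y := by
    intro x hx
    have hadj : AdjColor θ (κ x) (κ y) := hNA x y hx
    have hxne : κ x ≠ κ y := by
      intro h
      have := hθ.1 (κ y)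
      unfold AdjColor at hadj
      rw [h, this] at hadj
      omega
    have hadj' : AdjColor θ (κ x) (κ x') := by rw [hx'col]; exact hadj
    rcases hAC x x' hadj' with h | h
    · rcases eq_or_lt_of_le h with heq | hlt
      · exact absurd (by rw [heq]; exact hx'col) hxne
      · exact absurd hx'y (hx.2 hlt)
    · have hlt : x' < x := lt_of_le_of_ne h (fun he => hxne (by rw [← he]; exact hx'col))
      exact ⟨hlt, hx.1⟩
  -- counting
  have hIfin : (Set.Ioo x' y).Finite := Set.toFinite _
  have hCfin : ({x : P | x ⋖ y}).Finite := Set.toFinite _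
  have hsum : (∑ᶠ u ∈ Set.Ioo x' y, -θ (κ u) (κ y)) =
      ∑ u ∈ hIfin.toFinset, -θ (κ u) (κ y) := by
    rw [← finsum_mem_coe_finset, Set.Finite.coe_toFinset]
  have hsubF : hCfin.toFinset ⊆ hIfin.toFinset := by
    intro x hx
    rw [Set.Finite.mem_toFinset] at hx ⊢
    exact hsub hx
  have h1 : ∀ x ∈ hCfin.toFinset, (1 : ℤ) ≤ -θ (κ x) (κ y) := by
    intro x hx
    rw [Set.Finite.mem_toFinset] at hx
    have hadj : AdjColor θ (κ x) (κ y) := hNA x y hx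
    unfold AdjColor at hadj
    omega
  have h0 : ∀ u ∈ hIfin.toFinset, u ∉ hCfin.toFinset → (0 : ℤ) ≤ -θ (κ u) (κ y) := by
    intro u hu _
    rw [Set.Finite.mem_toFinset] at hu
    have := hθ.2.1 (κ u) (κ y) (hnoA u hu)
    omega
  have hcard : (hCfin.toFinset.card : ℤ) ≤ ∑ x ∈ hCfin.toFinset, -θ (κ x) (κ y) := by
    calc (hCfin.toFinset.card : ℤ) = hCfin.toFinset.card • (1 : ℤ) := by simp
    _ ≤ ∑ x ∈ hCfin.toFinset, -θ (κ x) (κ y) := Finset.card_nsmul_le_sum _ _ _ h1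
  have hle : (∑ x ∈ hCfin.toFinset, -θ (κ x) (κ y)) ≤
      ∑ u ∈ hIfin.toFinset, -θ (κ u) (κ y) :=
    Finset.sum_le_sum_of_subset_of_nonneg hsubF h0
  have hfinal : (hCfin.toFinset.card : ℤ) ≤ 2 := by
    rw [hsum] at hICE
    omega
  rw [Set.ncard_eq_toFinset_card' ]
  have : ({x : P | x ⋖ y}).toFinset.card = hCfin.toFinset.card := by
    congr 1
    ext x
    simp [Set.Finite.mem_toFinset]
  rw [this]
  exact_mod_cast hfinal
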